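/- Let S_{ℓ,r} be the weighted seesaw graph: vertices 1 and 2 with weight 0, an edge {1,2}, a path of ℓ vertices each of weight -2 attached by one endpoint to vertex 2, and a path of r vertices each of weight -2 attached by one endpoint to vertex 2, all edges having weight 1. Then the determinant of its weighted adjacency matrix A(S_{ℓ,r}) equals (-1)^{1+ℓ+r} (1+ℓ)(1+r). -/

import Mathlib

set_option maxHeartbeats 1600000


/-- Entry (i,j) of the weighted adjacency matrix of the seesaw graph S_{ℓ,r}
(0-indexed): vertices 0,1 are the two weight-0 vertices joined by an edge;
vertices 2,…,ℓ+1 form the left weight-(-2) path attached to vertex 1;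
vertices ℓ+2,…,ℓ+r+1 form the right weight-(-2) path attached to vertex 1.
All edges have weight 1. -/
def seesawEntry (l r i j : ℕ) : ℝ :=
  if i = j then (if i ≤ 1 then 0 else -2)
  else if (i = 0 ∧ j = 1) ∨ (j = 0 ∧ i = 1) then 1
  else if (i = 1 ∧ j = 2 ∧ 1 ≤ l) ∨ (j = 1 ∧ i = 2 ∧ 1 ≤ l) then 1
  else if (i = 1 ∧ j = l + 2 ∧ 1 ≤ r) ∨ (j = 1 ∧ i = l + 2 ∧ 1 ≤ r) then 1
  else if (j = i + 1 ∧ 2 ≤ i ∧ i + 1 ≤ l + 1) ∨ (i = j + 1 ∧ 2 ≤ j ∧ j + 1 ≤ l + 1) then 1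
  else if (j = i + 1 ∧ l + 2 ≤ i ∧ i + 1 ≤ l + r + 1) ∨
      (i = j + 1 ∧ l + 2 ≤ j ∧ j + 1 ≤ l + r + 1) then 1
  else 0

/-- The weighted adjacency matrix of the seesaw graph S_{ℓ,r}. -/
noncomputable def seesawMatrix (l r : ℕ) : Matrix (Fin (2 + l + r)) (Fin (2 + l + r)) ℝ :=
  fun i j => seesawEntry l r (i : ℕ) (j : ℕ)

/-- det A(S_{ℓ,r}) = (-1)^{1+ℓ+r} (1+ℓ)(1+r). -/
def pathM (k : ℕ) : Matrix (Fin k) (Fin k) ℝ :=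
  fun i j => if (i:ℕ) = j then -2 else if (i:ℕ)+1 = j ∨ (j:ℕ)+1 = i then 1 else 0

lemma sa1_succ (n : ℕ) (j : Fin n) : (((1 : Fin (n+2)).succAbove j.succ) : ℕ) = j + 2 := by
  simp [Fin.succAbove, Fin.lt_def]
lemma sa1_zero (n : ℕ) : (((1 : Fin (n+2)).succAbove (0 : Fin (n+1))) : ℕ) = 0 := by
  simp [Fin.succAbove, Fin.lt_def]

lemma pathDet : ∀ k, (pathM k).det = (-1)^k * (k+1)
  | 0 => by simp [Matrix.det_isEmpty]
  | 1 => by simp [Matrix.det_fin_one, pathM]; norm_num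
  | (k+2) => by
    rw [Matrix.det_succ_row_zero, Fin.sum_univ_succ, Fin.sum_univ_succ]
    have h0 : (pathM (k+2)).submatrix Fin.succ ((0 : Fin (k+2)).succAbove) = pathM (k+1) := by
      ext i j
      simp only [Matrix.submatrix_apply, pathM, Fin.succAbove_zero, Fin.val_succ]
      split_ifs <;> first | rfl | omega | simp_all | (simp_all; omega)
    have hrest : ∀ j : Fin k, pathM (k+2) 0 j.succ.succ = 0 := by
      intro j
      simp only [pathM, Fin.val_succ, Fin.val_zero]
      split_ifs <;> first | rfl | omega | simp_all | (simp_all; omega)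
    have h1 : ((pathM (k+2)).submatrix Fin.succ ((1 : Fin (k+2)).succAbove)).det
        = (pathM k).det := by
      set B := (pathM (k+2)).submatrix Fin.succ ((1 : Fin (k+2)).succAbove) with hB
      rw [Matrix.det_succ_column_zero, Fin.sum_univ_succ]
      have hB0 : B 0 0 = 1 := by
        simp only [hB, Matrix.submatrix_apply]
        have : (((1 : Fin (k+2)).succAbove (0 : Fin (k+1))) : ℕ) = 0 := sa1_zero k
        simp only [pathM, Fin.val_succ, Fin.val_zero, this]
        split_ifs <;> first | rfl | omega | simp_all | (simp_all; omega)
      have hBi : ∀ i : Fin k, B i.succ 0 = 0 := by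
        intro i
        simp only [hB, Matrix.submatrix_apply]
        have : (((1 : Fin (k+2)).succAbove (0 : Fin (k+1))) : ℕ) = 0 := sa1_zero k
        simp only [pathM, Fin.val_succ, this]
        split_ifs <;> first | rfl | omega | simp_all | (simp_all; omega)
      have hBsub : B.submatrix ((0 : Fin (k+1)).succAbove) Fin.succ = pathM k := by
        ext i j
        simp only [hB, Matrix.submatrix_apply, Fin.succAbove_zero]
        have : (((1 : Fin (k+2)).succAbove j.succ) : ℕ) = j + 2 := sa1_succ k j
        simp only [pathM, Fin.val_succ, this]
        split_ifs <;> first | rfl | omega | simp_all | (simp_all; omega)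
      rw [hB0, hBsub]
      simp only [hBi]
      simp
    rw [show (Fin.succ (0 : Fin (k+1))) = (1 : Fin (k+2)) from rfl]
    rw [h0, h1]
    have e1 : pathM (k+2) 0 1 = 1 := by
      simp only [pathM, Fin.val_zero, Fin.val_one]; norm_num
    rw [e1, pathDet (k+1), pathDet k]
    simp only [hrest, mul_zero, zero_mul, Finset.sum_const_zero, add_zero,
      Fin.val_zero, Fin.val_one, pow_zero, pow_one]
    have e0 : pathM (k+2) 0 0 = -2 := by simp [pathM]
    rw [e0]
    push_cast
    ring

theorem stmt11 (l r : ℕ) :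
    (seesawMatrix l r).det = (-1 : ℝ) ^ (1 + l + r) * (1 + l) * (1 + r) := by
  set N : Matrix (Fin (l+r+2)) (Fin (l+r+2)) ℝ :=
    fun i j => seesawEntry l r (i : ℕ) (j : ℕ) with hN
  have e : 2 + l + r = l + r + 2 := by omega
  have htr : seesawMatrix l r = N.submatrix (finCongr e) (finCongr e) := by
    ext i j
    simp only [Matrix.submatrix_apply]
    simp [seesawMatrix, hN, Matrix.submatrix_apply]
  rw [htr, Matrix.det_submatrix_equiv_self]
  -- expand along row 0
  rw [Matrix.det_succ_row_zero, Fin.sum_univ_succ, Fin.sum_univ_succ]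
  have hN00 : N 0 0 = 0 := by
    simp only [hN, Fin.val_zero]
    simp [seesawEntry]
  have hN01 : N 0 1 = 1 := by
    simp only [hN, Fin.val_zero, Fin.val_one]
    simp only [seesawEntry]
    split_ifs <;> first | rfl | omega | simp_all | (simp_all; omega)
  have hrest : ∀ j : Fin (l+r), N 0 j.succ.succ = 0 := by
    intro j
    simp only [hN, Fin.val_succ, Fin.val_zero, seesawEntry]
    split_ifs <;> first | rfl | omega | simp_all | (simp_all; omega)
  set C : Matrix (Fin (l+r)) (Fin (l+r)) ℝ :=
    fun i j => seesawEntry l r ((i:ℕ)+2) ((j:ℕ)+2) with hC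
  have h1 : (N.submatrix Fin.succ ((1 : Fin (l+r+2)).succAbove)).det = C.det := by
    set B := N.submatrix Fin.succ ((1 : Fin (l+r+2)).succAbove) with hB
    rw [Matrix.det_succ_column_zero, Fin.sum_univ_succ]
    have hB0 : B 0 0 = 1 := by
      simp only [hB, Matrix.submatrix_apply]
      simp only [hN]
      have : (((1 : Fin (l+r+2)).succAbove (0 : Fin (l+r+1))) : ℕ) = 0 := sa1_zero (l+r)
      simp only [seesawEntry, Fin.val_succ, Fin.val_zero, this]
      split_ifs <;> first | rfl | omega | simp_all | (simp_all; omega)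
    have hBi : ∀ i : Fin (l+r), B i.succ 0 = 0 := by
      intro i
      simp only [hB, Matrix.submatrix_apply]
      simp only [hN]
      have : (((1 : Fin (l+r+2)).succAbove (0 : Fin (l+r+1))) : ℕ) = 0 := sa1_zero (l+r)
      simp only [seesawEntry, Fin.val_succ, this]
      split_ifs <;> first | rfl | omega | simp_all | (simp_all; omega)
    have hBsub : B.submatrix ((0 : Fin (l+r+1)).succAbove) Fin.succ = C := by
      ext i j
      simp only [hB, Matrix.submatrix_apply, Fin.succAbove_zero]
      simp only [hN, hC]
      have : (((1 : Fin (l+r+2)).succAbove j.succ) : ℕ) = j + 2 := sa1_succ (l+r) j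
      simp only [Fin.val_succ, this]
    rw [hB0, hBsub]
    simp only [hBi]
    simp
  have hCblocks : C.submatrix finSumFinEquiv finSumFinEquiv
      = Matrix.fromBlocks (pathM l) 0 0 (pathM r) := by
    ext i j
    rcases i with a | a <;> rcases j with b | b <;>
      · have ha := a.is_lt
        have hb := b.is_lt
        simp only [Matrix.submatrix_apply]
        simp only [Matrix.submatrix_apply, finSumFinEquiv_apply_left, finSumFinEquiv_apply_right,
          Matrix.fromBlocks_apply₁₁, Matrix.fromBlocks_apply₁₂, Matrix.fromBlocks_apply₂₁,
          Matrix.fromBlocks_apply₂₂, hC, seesawEntry, pathM, Fin.coe_castAdd, Fin.coe_natAdd,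
          Matrix.zero_apply]
        split_ifs <;> first | rfl | omega | simp_all | (simp_all; omega)
  have hCdet : C.det = (pathM l).det * (pathM r).det := by
    rw [← Matrix.det_submatrix_equiv_self finSumFinEquiv C, hCblocks,
      Matrix.det_fromBlocks_zero₁₂]
  rw [show (Fin.succ (0 : Fin (l+r+1))) = (1 : Fin (l+r+2)) from rfl]
  rw [h1, hCdet, pathDet l, pathDet r, hN00, hN01]
  simp only [hrest, mul_zero, zero_mul, Finset.sum_const_zero, add_zero,
    Fin.val_zero, Fin.val_one, pow_zero, pow_one]
  rw [show (1 + l + r) = (1 + l) + r from rfl, pow_add, pow_add]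
  push_cast
  ring
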